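/- arXiv:1712.05145 — 5 statements merged into one kernel-verified Lean document; each statement's English description precedes it below -/
import Mathlib

section
/- The Green operator Γ̂⁰(ξ) is a projection when restricted composed with C⁰: for any nonzero ξ ∈ ℝ³ and any symmetric τ ∈ ℝ³ˣ³, Γ̂⁰(ξ) : (C⁰ : (Γ̂⁰(ξ) : τ)) = Γ̂⁰(ξ) : τ. -/
open scoped BigOperators

set_option maxHeartbeats 1000000

noncomputable section

/-- Kronecker delta on `Fin 3`. -/
def kron (i j : Fin 3) : ℝ := if i = j then 1 else 0

/-- squared Euclidean norm of a frequency vector. -/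
def nsq (ξ : Fin 3 → ℝ) : ℝ := ∑ j, ξ j ^ 2

/-- Fourier coefficients of the Green strain operator `Γ̂⁰(ξ)`. -/
def Gamma0 (lam mu : ℝ) (ξ : Fin 3 → ℝ) (i j k l : Fin 3) : ℝ :=
  (1 / (4 * mu * nsq ξ)) *
      (kron k i * ξ l * ξ j + kron l i * ξ k * ξ j +
        kron k j * ξ l * ξ i + kron l j * ξ k * ξ i) -
    ((lam + mu) / (mu * (lam + 2 * mu))) * (ξ i * ξ j * ξ k * ξ l / (nsq ξ) ^ 2)

/-- Isotropic reference stiffness tensor `C⁰`. -/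
def C0 (lam mu : ℝ) (i j k l : Fin 3) : ℝ :=
  lam * kron i j * kron k l + mu * (kron i k * kron j l + kron i l * kron j k)

/-- Double contraction of a fourth-order tensor with a matrix: `(T : τ)_{ij} = Σ_{k,l} T_{ijkl} τ_{kl}`. -/
def dcontract (T : Fin 3 → Fin 3 → Fin 3 → Fin 3 → ℝ) (τ : Matrix (Fin 3) (Fin 3) ℝ) :
    Matrix (Fin 3) (Fin 3) ℝ :=
  Matrix.of fun i j => ∑ k, ∑ l, T i j k l * τ k l

/-- Closed form for `Γ̂⁰(ξ) : σ` for a symmetric matrix `σ`. -/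
lemma gcontract (lam mu : ℝ) (ξ : Fin 3 → ℝ)
    (σ : Matrix (Fin 3) (Fin 3) ℝ) (hσ : σ.IsSymm) (i j : Fin 3) :
    dcontract (Gamma0 lam mu ξ) σ i j =
      (1 / (2 * mu * nsq ξ)) *
        (ξ i * (∑ l, σ j l * ξ l) + ξ j * (∑ l, σ i l * ξ l)) -
      ((lam + mu) / (mu * (lam + 2 * mu))) *
        ((∑ k, ∑ l, σ k l * ξ k * ξ l) * ξ i * ξ j / (nsq ξ) ^ 2) := by
  have h10 : σ 1 0 = σ 0 1 := congrFun (congrFun hσ 0) 1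
  have h20 : σ 2 0 = σ 0 2 := congrFun (congrFun hσ 0) 2
  have h21 : σ 2 1 = σ 1 2 := congrFun (congrFun hσ 1) 2
  fin_cases i <;> fin_cases j <;>
  · simp [dcontract, Gamma0, kron, Fin.sum_univ_three, h10, h20, h21]
    ring

/-- Projection property: `Γ̂⁰(ξ) : (C⁰ : (Γ̂⁰(ξ) : τ)) = Γ̂⁰(ξ) : τ`, where
`C⁰ : ε = λ (tr ε) Id + 2μ ε` is the isotropic reference tensor. -/
theorem gamma0_projection (lam mu : ℝ) (hmu : mu ≠ 0) (hlm : lam + 2 * mu ≠ 0)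
    (ξ : Fin 3 → ℝ) (hξ : ξ ≠ 0)
    (τ : Matrix (Fin 3) (Fin 3) ℝ) (hτ : τ.IsSymm)
    (Cop : Matrix (Fin 3) (Fin 3) ℝ → Matrix (Fin 3) (Fin 3) ℝ)
    (hCop : ∀ e : Matrix (Fin 3) (Fin 3) ℝ,
      Cop e = lam • e.trace • (1 : Matrix (Fin 3) (Fin 3) ℝ) + (2 * mu) • e) :
    dcontract (Gamma0 lam mu ξ) (Cop (dcontract (Gamma0 lam mu ξ) τ)) =
      dcontract (Gamma0 lam mu ξ) τ := by
  have hn : nsq ξ ≠ 0 := by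
    intro h
    apply hξ
    funext k
    have := (Finset.sum_eq_zero_iff_of_nonneg (fun j _ => sq_nonneg (ξ j))).mp h k
      (Finset.mem_univ k)
    exact pow_eq_zero_iff two_ne_zero |>.mp this
  have hn' : ξ 0 ^ 2 + ξ 1 ^ 2 + ξ 2 ^ 2 ≠ 0 := by
    simpa [nsq, Fin.sum_univ_three] using hn
  -- symmetry of `G := Γ̂⁰(ξ) : τ`
  have hGsym : (dcontract (Gamma0 lam mu ξ) τ).IsSymm := by
    ext i j
    rw [Matrix.transpose_apply, gcontract lam mu ξ τ hτ j i, gcontract lam mu ξ τ hτ i j]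
    ring
  have hσ'sym : (Cop (dcontract (Gamma0 lam mu ξ) τ)).IsSymm := by
    rw [hCop]
    ext i j
    simp only [Matrix.transpose_apply, Matrix.add_apply, Matrix.smul_apply, Matrix.one_apply,
      smul_eq_mul]
    rw [hGsym.apply i j]
    by_cases h : i = j <;> simp [h, eq_comm]
  -- key fact : `(C⁰ : G) ξ = τ ξ` (componentwise)
  have factA : ∀ i, (∑ l, Cop (dcontract (Gamma0 lam mu ξ) τ) i l * ξ l)
      = ∑ l, τ i l * ξ l := by
    intro i
    rw [hCop]
    simp only [Matrix.add_apply, Matrix.smul_apply, Matrix.one_apply, smul_eq_mul,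
      Matrix.trace, Matrix.diag, Fin.sum_univ_three]
    rw [gcontract lam mu ξ τ hτ 0 0, gcontract lam mu ξ τ hτ 1 1, gcontract lam mu ξ τ hτ 2 2,
      gcontract lam mu ξ τ hτ i 0, gcontract lam mu ξ τ hτ i 1, gcontract lam mu ξ τ hτ i 2]
    fin_cases i <;>
    · simp [nsq, Fin.sum_univ_three]
      field_simp [show lam + mu * 2 ≠ 0 by rw [mul_comm]; exact hlm]
      ring
  have factB : (∑ k, ∑ l, Cop (dcontract (Gamma0 lam mu ξ) τ) k l * ξ k * ξ l)
      = ∑ k, ∑ l, τ k l * ξ k * ξ l := by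
    have h : ∀ (σ : Matrix (Fin 3) (Fin 3) ℝ),
        (∑ k, ∑ l, σ k l * ξ k * ξ l) = ∑ k, (∑ l, σ k l * ξ l) * ξ k := by
      intro σ
      refine Finset.sum_congr rfl fun k _ => ?_
      rw [Finset.sum_mul]
      exact Finset.sum_congr rfl fun l _ => by ring
    rw [h, h]
    exact Finset.sum_congr rfl fun k _ => by rw [factA k]
  ext i j
  rw [gcontract lam mu ξ _ hσ'sym i j, gcontract lam mu ξ τ hτ i j, factA i, factA j, factB]
end
end

section
/- For nonzero ξ ∈ ℝ³, the Green operator satisfies Γ̂⁰_{ijkl}(ξ) = (1/4)(N_{ik}ξ_jξ_l + N_{il}ξ_jξ_k + N_{jk}ξ_iξ_l + N_{jl}ξ_iξ_k), where N = A(ξ)⁻¹ is the inverse acoustic tensor A(ξ) = μ⁰‖ξ‖² Id + (λ⁰+μ⁰) ξ⊗ξ. -/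
open scoped BigOperators

noncomputable section

lemma nsq_pos (ξ : Fin 3 → ℝ) (hξ : ξ ≠ 0) : 0 < nsq ξ := by
  obtain ⟨j, hj⟩ := Function.ne_iff.mp hξ
  have hj' : ξ j ≠ 0 := hj
  exact Finset.sum_pos' (fun i _ => sq_nonneg _)
    ⟨j, Finset.mem_univ j, lt_of_le_of_ne (sq_nonneg _) (Ne.symm (pow_ne_zero 2 hj'))⟩

lemma kron_comm (i j : Fin 3) : kron i j = kron j i := by
  simp [kron, eq_comm]

lemma sum_kron_left (i : Fin 3) (f : Fin 3 → ℝ) : ∑ k, kron i k * f k = f i := by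
  simp [kron]

lemma sum_kron_right (j : Fin 3) (f : Fin 3 → ℝ) : ∑ k, kron k j * f k = f j := by
  simp [kron]

/-- Representation of `Γ̂⁰(ξ)` through the inverse acoustic tensor `N = A(ξ)⁻¹`. -/
theorem gamma0_via_acoustic (lam mu : ℝ) (hmu : mu ≠ 0) (hlm : lam + 2 * mu ≠ 0)
    (ξ : Fin 3 → ℝ) (hξ : ξ ≠ 0)
    (N : Matrix (Fin 3) (Fin 3) ℝ)
    (hN₁ : (Matrix.of fun i k => mu * nsq ξ * kron i k + (lam + mu) * ξ i * ξ k) * N = 1)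
    (hN₂ : N * (Matrix.of fun i k => mu * nsq ξ * kron i k + (lam + mu) * ξ i * ξ k) = 1) :
    ∀ i j k l : Fin 3,
      Gamma0 lam mu ξ i j k l =
        (1 / 4) * (N i k * ξ j * ξ l + N i l * ξ j * ξ k +
          N j k * ξ i * ξ l + N j l * ξ i * ξ k) := by
  have hs : nsq ξ ≠ 0 := ne_of_gt (nsq_pos ξ hξ)
  set s := nsq ξ with hsdef
  set c := lam + mu with hcdef
  set A : Matrix (Fin 3) (Fin 3) ℝ :=
    Matrix.of fun i k => mu * s * kron i k + c * ξ i * ξ k with hA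
  set M : Matrix (Fin 3) (Fin 3) ℝ :=
    Matrix.of fun i k => kron i k / (mu * s) -
      c * ξ i * ξ k / (mu * s * (lam + 2 * mu) * s) with hM
  have hAM : A * M = 1 := by
    ext i j
    rw [Matrix.mul_apply]
    have expand : ∀ k, A i k * M k j =
        kron i k * (mu * s * (kron k j / (mu * s) -
            c * ξ k * ξ j / (mu * s * (lam + 2 * mu) * s))) +
          kron k j * (c * ξ i * ξ k / (mu * s)) +
          ξ k ^ 2 * (-(c * c * ξ i * ξ j / (mu * s * (lam + 2 * mu) * s))) := by
      intro k
      simp only [hA, hM, Matrix.of_apply]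
      ring
    rw [Finset.sum_congr rfl (fun k _ => expand k)]
    rw [Finset.sum_add_distrib, Finset.sum_add_distrib,
      sum_kron_left, sum_kron_right, ← Finset.sum_mul]
    have hVs : (∑ k, ξ k ^ 2) = s := rfl
    rw [hVs, Matrix.one_apply]
    have hk : kron i j = if i = j then (1 : ℝ) else 0 := rfl
    rw [← hk]
    field_simp
    have hL : mu * 2 + lam ≠ 0 := by intro h; apply hlm; linarith
    have hLL : (mu * 2 + lam) * (mu * 2 + lam)⁻¹ = 1 := mul_inv_cancel₀ hL
    rw [hcdef]
    linear_combination (-(lam + mu) * ξ i * ξ j) * hLL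
  have hNM : N = M := by
    calc N = N * (A * M) := by rw [hAM, Matrix.mul_one]
    _ = (N * A) * M := by rw [Matrix.mul_assoc]
    _ = M := by rw [hN₂, Matrix.one_mul]
  intro i j k l
  rw [hNM]
  simp only [hM, Matrix.of_apply, Gamma0, ← hsdef, ← hcdef,
    kron_comm k i, kron_comm l i, kron_comm k j, kron_comm l j]
  field_simp
  ring
end
end

section
/- For any nonzero ξ ∈ ℝ³ and any vector a ∈ ℝ³, letting ε̂ = (i/2)(a⊗ξ + ξ⊗a) be the Fourier strain of the displacement mode û = a (i.e., u(x) = a exp(iξ·x)), the Lippmann–Schwinger consistency holds: Γ̂⁰(ξ) : (C⁰ : ε̂) = ε̂. -/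
open scoped BigOperators

noncomputable section

-- Per-entry formula for the contraction with `Γ̂⁰`.
lemma dcontract_gamma0_eq (lam mu : ℝ) (ξ : Fin 3 → ℝ) (τ : Matrix (Fin 3) (Fin 3) ℝ)
    (i j : Fin 3) :
    dcontract (Gamma0 lam mu ξ) τ i j =
      (1 / (4 * mu * nsq ξ)) *
          ((∑ l, ξ l * τ i l) * ξ j + (∑ k, ξ k * τ k i) * ξ j +
            (∑ l, ξ l * τ j l) * ξ i + (∑ k, ξ k * τ k j) * ξ i) -
        ((lam + mu) / (mu * (lam + 2 * mu))) *
          (ξ i * ξ j * (∑ k, ∑ l, ξ k * ξ l * τ k l) / (nsq ξ) ^ 2) := by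
  simp only [dcontract, Gamma0, Matrix.of_apply, Fin.sum_univ_three]
  fin_cases i <;> fin_cases j <;> simp [kron] <;> ring

/-- Lippmann–Schwinger consistency: for the (real form of the) Fourier strain
`ε̂ = (1/2)(a⊗ξ + ξ⊗a)` of a displacement mode, `Γ̂⁰(ξ) : (C⁰ : ε̂) = ε̂`. -/
theorem gamma0_consistency (lam mu : ℝ) (hmu : mu ≠ 0) (hlm : lam + 2 * mu ≠ 0)
    (ξ : Fin 3 → ℝ) (hξ : ξ ≠ 0) (a : Fin 3 → ℝ) :
    (let ε : Matrix (Fin 3) (Fin 3) ℝ :=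
        Matrix.of fun i j => (1 / 2) * (a i * ξ j + ξ i * a j)
      let Cop : Matrix (Fin 3) (Fin 3) ℝ → Matrix (Fin 3) (Fin 3) ℝ :=
        fun e => lam • e.trace • (1 : Matrix (Fin 3) (Fin 3) ℝ) + (2 * mu) • e
      dcontract (Gamma0 lam mu ξ) (Cop ε) = ε) := by
  have hn : nsq ξ ≠ 0 := by
    have hpos : 0 < nsq ξ := by
      rcases Function.ne_iff.mp hξ with ⟨i, hi⟩
      have hi' : ξ i ≠ 0 := by simpa using hi
      have h1 : 0 < ξ i ^ 2 := by positivity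
      have h2 := Finset.single_le_sum (f := fun j => ξ j ^ 2)
        (fun k _ => sq_nonneg (ξ k)) (Finset.mem_univ i)
      exact lt_of_lt_of_le h1 h2
    exact ne_of_gt hpos
  intro ε Cop
  set s : ℝ := ∑ l, a l * ξ l with hs
  have htr : ε.trace = s := by
    simp [ε, Matrix.trace, Matrix.diag, Fin.sum_univ_three, hs]
    ring
  have hε : ∀ i l, ε i l = 1 / 2 * (a i * ξ l + ξ i * a l) := fun i l => rfl
  have hτ : ∀ i l, Cop ε i l =
      lam * s * (if i = l then 1 else 0) + mu * (a i * ξ l + ξ i * a l) := by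
    intro i l
    simp only [Cop, Matrix.add_apply, Matrix.smul_apply, smul_eq_mul, Matrix.one_apply, htr, hε]
    by_cases h : i = l <;> simp [h] <;> ring
  have hrow : ∀ i, (∑ l, ξ l * Cop ε i l) = lam * s * ξ i + mu * (a i * nsq ξ + ξ i * s) := by
    intro i
    simp only [hτ, Fin.sum_univ_three, nsq, hs]
    fin_cases i <;> simp <;> ring
  have hcol : ∀ i, (∑ k, ξ k * Cop ε k i) = lam * s * ξ i + mu * (a i * nsq ξ + ξ i * s) := by
    intro i
    simp only [hτ, Fin.sum_univ_three, nsq, hs]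
    fin_cases i <;> simp <;> ring
  have hQ : (∑ k, ∑ l, ξ k * ξ l * Cop ε k l) = (lam + 2 * mu) * s * nsq ξ := by
    simp only [hτ, Fin.sum_univ_three, nsq, hs]
    simp
    ring
  ext i j
  rw [dcontract_gamma0_eq, hrow, hrow, hcol, hcol, hQ]
  show _ = (1 / 2) * (a i * ξ j + ξ i * a j)
  field_simp
  field_simp
  ring
end
end

section
/- Kernel characterization: for nonzero ξ ∈ ℝ³ with μ⁰ ≠ 0 and λ⁰+2μ⁰ ≠ 0, a symmetric matrix τ satisfies Γ̂⁰(ξ) : τ = 0 if and only if the vector τ ξ = 0. -/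
open scoped BigOperators

set_option maxHeartbeats 1600000

noncomputable section

/-- Kernel characterization: for symmetric `τ`, `Γ̂⁰(ξ) : τ = 0` iff `τ ξ = 0`. -/
theorem gamma0_kernel (lam mu : ℝ) (hmu : mu ≠ 0) (hlm : lam + 2 * mu ≠ 0)
    (ξ : Fin 3 → ℝ) (hξ : ξ ≠ 0)
    (τ : Matrix (Fin 3) (Fin 3) ℝ) (hτ : τ.IsSymm) :
    dcontract (Gamma0 lam mu ξ) τ = 0 ↔ τ.mulVec ξ = 0 := by
  have hn : nsq ξ ≠ 0 := by
    obtain ⟨i, hi⟩ := Function.ne_iff.mp hξ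
    have : 0 < nsq ξ := Finset.sum_pos' (fun j _ => sq_nonneg _)
      ⟨i, Finset.mem_univ i, lt_of_le_of_ne (sq_nonneg _) (Ne.symm (pow_ne_zero 2 hi))⟩
    exact ne_of_gt this
  have hn' : ξ 0 ^ 2 + ξ 1 ^ 2 + ξ 2 ^ 2 ≠ 0 := by
    simpa [nsq, Fin.sum_univ_three] using hn
  set v : Fin 3 → ℝ := τ.mulVec ξ with hv
  have hsym : ∀ i j, τ j i = τ i j := fun i j => hτ.apply i j
  have h10 := hsym 0 1
  have h20 := hsym 0 2
  have h21 := hsym 1 2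
  set s : ℝ := ∑ k, ξ k * v k with hs
  have key : ∀ i j, dcontract (Gamma0 lam mu ξ) τ i j =
      (1 / (4 * mu * nsq ξ)) * (2 * (ξ i * v j) + 2 * (ξ j * v i)) -
        ((lam + mu) / (mu * (lam + 2 * mu))) * (ξ i * ξ j * s / (nsq ξ) ^ 2) := by
    intro i j
    fin_cases i <;> fin_cases j <;>
      (simp only [dcontract, Gamma0, kron, hv, hs, Matrix.mulVec, dotProduct,
          Matrix.of_apply, Fin.sum_univ_three, Fin.mk_zero, Fin.mk_one, Fin.isValue,
          show (⟨2, by omega⟩ : Fin 3) = 2 from rfl, Fin.reduceEq, reduceIte, h10, h20, h21];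
       ring)
  constructor
  · intro hz
    have he : ∀ i j, (1 / (4 * mu * nsq ξ)) * (2 * (ξ i * v j) + 2 * (ξ j * v i)) -
        ((lam + mu) / (mu * (lam + 2 * mu))) * (ξ i * ξ j * s / (nsq ξ) ^ 2) = 0 := by
      intro i j
      rw [← key i j, hz]
      rfl
    have hA : ∀ j, (1 / (4 * mu * nsq ξ)) * (2 * (nsq ξ * v j) + 2 * (ξ j * s)) -
        ((lam + mu) / (mu * (lam + 2 * mu))) * (ξ j * nsq ξ * s / (nsq ξ) ^ 2) = 0 := by
      intro j
      have hsum : ξ 0 * ((1 / (4 * mu * nsq ξ)) * (2 * (ξ 0 * v j) + 2 * (ξ j * v 0)) -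
            ((lam + mu) / (mu * (lam + 2 * mu))) * (ξ 0 * ξ j * s / (nsq ξ) ^ 2)) +
          ξ 1 * ((1 / (4 * mu * nsq ξ)) * (2 * (ξ 1 * v j) + 2 * (ξ j * v 1)) -
            ((lam + mu) / (mu * (lam + 2 * mu))) * (ξ 1 * ξ j * s / (nsq ξ) ^ 2)) +
          ξ 2 * ((1 / (4 * mu * nsq ξ)) * (2 * (ξ 2 * v j) + 2 * (ξ j * v 2)) -
            ((lam + mu) / (mu * (lam + 2 * mu))) * (ξ 2 * ξ j * s / (nsq ξ) ^ 2)) =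
          (1 / (4 * mu * nsq ξ)) * (2 * (nsq ξ * v j) + 2 * (ξ j * s)) -
            ((lam + mu) / (mu * (lam + 2 * mu))) * (ξ j * nsq ξ * s / (nsq ξ) ^ 2) := by
        simp only [nsq, hs, Fin.sum_univ_three]
        ring
      rw [he 0 j, he 1 j, he 2 j] at hsum
      simpa using hsum.symm
    have hB : s / (lam + 2 * mu) = 0 := by
      have hsum : ξ 0 * ((1 / (4 * mu * nsq ξ)) * (2 * (nsq ξ * v 0) + 2 * (ξ 0 * s)) -
            ((lam + mu) / (mu * (lam + 2 * mu))) * (ξ 0 * nsq ξ * s / (nsq ξ) ^ 2)) +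
          ξ 1 * ((1 / (4 * mu * nsq ξ)) * (2 * (nsq ξ * v 1) + 2 * (ξ 1 * s)) -
            ((lam + mu) / (mu * (lam + 2 * mu))) * (ξ 1 * nsq ξ * s / (nsq ξ) ^ 2)) +
          ξ 2 * ((1 / (4 * mu * nsq ξ)) * (2 * (nsq ξ * v 2) + 2 * (ξ 2 * s)) -
            ((lam + mu) / (mu * (lam + 2 * mu))) * (ξ 2 * nsq ξ * s / (nsq ξ) ^ 2)) =
          s / (lam + 2 * mu) := by
        simp only [nsq, hs, Fin.sum_univ_three]
        have hlm2 : lam + mu * 2 ≠ 0 := by rwa [mul_comm mu 2]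
        field_simp
        ring
      rw [hA 0, hA 1, hA 2] at hsum
      simpa using hsum.symm
    have hs0 : s = 0 := by
      rcases (div_eq_zero_iff.mp hB) with h | h
      · exact h
      · exact absurd h hlm
    funext j
    have hAj := hA j
    rw [hs0] at hAj
    have : nsq ξ * v j = 0 := by
      field_simp at hAj
      simp only [mul_zero, zero_mul, zero_div, add_zero, sub_zero] at hAj
      linarith
    rcases mul_eq_zero.mp this with h | h
    · exact absurd h hn
    · exact h
  · intro hz
    funext i j
    rw [key i j]
    have hvz : ∀ k, v k = 0 := fun k => congrFun hz k
    have hsz : s = 0 := by simp [hs, hvz]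
    simp [hvz, hsz]
end
end

section
/- Trace identity: for any nonzero ξ ∈ ℝ³ and symmetric τ ∈ ℝ³ˣ³, tr(Γ̂⁰(ξ) : τ) = (ξᵀ τ ξ)/((λ⁰+2μ⁰)‖ξ‖²). -/
open scoped BigOperators

noncomputable section

set_option maxHeartbeats 4000000 in
/-- auxiliary: summing `Γ̂⁰` over the trace index. -/
lemma gamma0_diag_sum (lam mu : ℝ) (hmu : mu ≠ 0) (hlm : lam + 2 * mu ≠ 0)
    (ξ : Fin 3 → ℝ) (hn : nsq ξ ≠ 0) (k l : Fin 3) :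
    (∑ i, Gamma0 lam mu ξ i i k l)
      = (1 / ((lam + 2 * mu) * nsq ξ)) * (ξ k * ξ l) := by
  have hnsq : nsq ξ = ξ 0 ^ 2 + ξ 1 ^ 2 + ξ 2 ^ 2 := by
    simp [nsq, Fin.sum_univ_three]
  have hmid : (∑ i, Gamma0 lam mu ξ i i k l)
      = (1 / (4 * mu * nsq ξ)) * (4 * (ξ k * ξ l))
        - ((lam + mu) / (mu * (lam + 2 * mu)))
            * ((ξ 0 ^ 2 + ξ 1 ^ 2 + ξ 2 ^ 2) * (ξ k * ξ l) / (nsq ξ) ^ 2) := by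
    fin_cases k <;> fin_cases l <;>
      · simp only [Gamma0, kron, Fin.sum_univ_three, Fin.isValue]
        norm_num [Fin.ext_iff]
        try simp only [show (⟨2, by omega⟩ : Fin 3) = 2 from rfl]
        try ring
  rw [hmid, ← hnsq]
  field_simp
  have hlm' : lam + mu * 2 ≠ 0 := by rwa [mul_comm] at hlm
  field_simp
  ring

set_option maxHeartbeats 1000000 in
/-- Trace identity: `tr(Γ̂⁰(ξ) : τ) = (ξᵀ τ ξ)/((λ⁰+2μ⁰)‖ξ‖²)`. -/
theorem gamma0_trace (lam mu : ℝ) (hmu : mu ≠ 0) (hlm : lam + 2 * mu ≠ 0)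
    (ξ : Fin 3 → ℝ) (hξ : ξ ≠ 0)
    (τ : Matrix (Fin 3) (Fin 3) ℝ) (hτ : τ.IsSymm) :
    (dcontract (Gamma0 lam mu ξ) τ).trace =
      (∑ i, ∑ j, ξ i * τ i j * ξ j) / ((lam + 2 * mu) * nsq ξ) := by
  have hn : nsq ξ ≠ 0 := by
    have : ∃ i, ξ i ≠ 0 := by
      by_contra h
      push_neg at h
      exact hξ (funext h)
    obtain ⟨i, hi⟩ := this
    have hpos : 0 < nsq ξ := by
      have h2 : 0 < ξ i ^ 2 := by positivity
      have hle : ξ i ^ 2 ≤ nsq ξ :=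
        Finset.single_le_sum (f := fun j => ξ j ^ 2) (fun j _ => sq_nonneg _)
          (Finset.mem_univ i)
      linarith
    exact ne_of_gt hpos
  have hd : ∀ k l : Fin 3, (∑ i, Gamma0 lam mu ξ i i k l)
      = (1 / ((lam + 2 * mu) * nsq ξ)) * (ξ k * ξ l) :=
    gamma0_diag_sum lam mu hmu hlm ξ hn
  have hswap : (dcontract (Gamma0 lam mu ξ) τ).trace
      = ∑ k, ∑ l, (∑ i, Gamma0 lam mu ξ i i k l) * τ k l := by
    simp only [Matrix.trace, dcontract, Matrix.diag, Matrix.of_apply, Finset.sum_mul]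
    rw [Finset.sum_comm]
    refine Finset.sum_congr rfl fun k _ => ?_
    rw [Finset.sum_comm]
  rw [hswap]
  simp only [hd]
  rw [Fin.sum_univ_three]
  simp only [Fin.sum_univ_three]
  field_simp
end
end
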